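/- Weak duality for the Bellman LP: for any μ : S × A → ℝ≥0 satisfying the dual flow constraint Σ_a μ(s,a) = (1-γ) q(s) + γ Σ_{s',a'} P(s|s',a') μ(s',a') for all s, and any V feasible for the primal (V ≥ TV pointwise), one has Σ_{s,a} μ(s,a) r(s,a) ≤ (1-γ) Σ_s q(s) V(s). -/
import Mathlib


open scoped BigOperators

/-- `P` is a transition kernel: each `P s a` is a probability distribution on states. -/
def IsKernel {S A : Type*} [Fintype S] (P : S → A → S → ℝ) : Prop :=
  ∀ s a, (∀ s', 0 ≤ P s a s') ∧ (∑ s', P s a s') = 1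

/-- `π` is a randomized stationary policy. -/
def IsPolicy {S A : Type*} [Fintype A] (π : S → A → ℝ) : Prop :=
  ∀ s, (∀ a, 0 ≤ π s a) ∧ (∑ a, π s a) = 1

/-- State-transition matrix induced by a policy. -/
noncomputable def Pmat {S A : Type*} [Fintype A] (P : S → A → S → ℝ) (π : S → A → ℝ) :
    Matrix S S ℝ :=
  Matrix.of fun s s' => ∑ a, π s a * P s a s'

/-- Expected one-step reward under a policy. -/
noncomputable def rPol {S A : Type*} [Fintype A] (r : S → A → ℝ) (π : S → A → ℝ) : S → ℝ :=
  fun s => ∑ a, π s a * r s a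

/-- Expected discounted reward of the stationary policy `π` started at `s`. -/
noncomputable def polValue {S A : Type*} [Fintype S] [Fintype A] [DecidableEq S]
    (P : S → A → S → ℝ) (r : S → A → ℝ) (γ : ℝ) (π : S → A → ℝ) : S → ℝ :=
  fun s => ∑' t : ℕ, γ ^ t * ((Pmat P π ^ t).mulVec (rPol r π)) s

/-- The Bellman optimality operator. -/
noncomputable def bellman {S A : Type*} [Fintype S] [Fintype A]
    (P : S → A → S → ℝ) (r : S → A → ℝ) (γ : ℝ) (V : S → ℝ) : S → ℝ :=
  fun s => ⨆ a, (r s a + γ * ∑ s', P s a s' * V s')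

/-- Primal (LP) feasibility: `V ≥ T V` pointwise, written constraint-wise. -/
def PrimalFeasible {S A : Type*} [Fintype S]
    (P : S → A → S → ℝ) (r : S → A → ℝ) (γ : ℝ) (V : S → ℝ) : Prop :=
  ∀ s a, r s a + γ * ∑ s', P s a s' * V s' ≤ V s

/-- Dual (LP) feasibility: nonnegativity and the flow-conservation constraint. -/
def DualFeasible {S A : Type*} [Fintype S] [Fintype A]
    (P : S → A → S → ℝ) (q : S → ℝ) (γ : ℝ) (μ : S → A → ℝ) : Prop :=
  (∀ s a, 0 ≤ μ s a) ∧
  ∀ s, ∑ a, μ s a = (1 - γ) * q s + γ * ∑ s', ∑ a', P s' a' s * μ s' a'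

/-- weak duality for the Bellman LP. -/
theorem bellman_lp_weak_duality
    {S A : Type*} [Fintype S] [Fintype A]
    (P : S → A → S → ℝ) (r : S → A → ℝ) (γ : ℝ) (q : S → ℝ)
    (hP : IsKernel P) (hγ0 : 0 ≤ γ) (hγ1 : γ < 1)
    (hq0 : ∀ s, 0 ≤ q s) (hq1 : ∑ s, q s = 1)
    (μ : S → A → ℝ) (hμ : DualFeasible P q γ μ)
    (V : S → ℝ) (hV : PrimalFeasible P r γ V) :
    ∑ s, ∑ a, μ s a * r s a ≤ (1 - γ) * ∑ s, q s * V s := by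
  obtain ⟨hμ0, hflow⟩ := hμ
  have step : ∑ s, ∑ a, μ s a * r s a ≤
      ∑ s, ∑ a, μ s a * (V s - γ * ∑ s', P s a s' * V s') := by
    apply Finset.sum_le_sum; intro s _
    apply Finset.sum_le_sum; intro a _
    have := hV s a
    have h := mul_le_mul_of_nonneg_left (by linarith : r s a ≤ V s - γ * ∑ s', P s a s' * V s') (hμ0 s a)
    linarith
  refine step.trans_eq ?_
  have expand : ∀ s, ∑ a, μ s a * (V s - γ * ∑ s', P s a s' * V s') =
      (∑ a, μ s a) * V s - γ * ∑ a, ∑ s', μ s a * (P s a s' * V s') := by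
    intro s
    have key : ∀ a, μ s a * (V s - γ * ∑ s', P s a s' * V s') =
        μ s a * V s - γ * ∑ s', μ s a * (P s a s' * V s') := by
      intro a; rw [mul_sub, mul_left_comm, Finset.mul_sum]
    simp only [key, Finset.sum_sub_distrib, ← Finset.sum_mul, ← Finset.mul_sum]
  simp only [expand]
  rw [Finset.sum_sub_distrib]
  have h1 : ∑ s, (∑ a, μ s a) * V s =
      (1 - γ) * ∑ s, q s * V s + γ * ∑ s, (∑ s', ∑ a', P s' a' s * μ s' a') * V s := by
    rw [Finset.mul_sum, Finset.mul_sum, ← Finset.sum_add_distrib]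
    apply Finset.sum_congr rfl; intro s _
    rw [hflow s]; ring
  rw [h1]
  have h2 : ∑ s, (∑ s', ∑ a', P s' a' s * μ s' a') * V s =
      ∑ s, ∑ a, ∑ s', μ s a * (P s a s' * V s') := by
    simp only [Finset.sum_mul]
    rw [Finset.sum_comm]
    apply Finset.sum_congr rfl; intro s' _
    rw [Finset.sum_comm]
    apply Finset.sum_congr rfl; intro a' _
    apply Finset.sum_congr rfl; intro s _
    ring
  rw [h2, ← Finset.mul_sum]
  ring
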